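/- Let n ≥ 1 and let N : ℝⁿ → ℝ be given by N(x) = Σ_{i=1}^{m} λ_i · max(0, g_i(x)), where g_i(x) = ⟨w_i, x⟩ + b_i. Let R, R′ ⊆ ℝⁿ be sets with nonempty interior, and let k ∈ {1,…,m} satisfy: R ⊆ {x : g_k(x) ≥ 0}, R′ ⊆ {x : g_k(x) ≤ 0}, and for every i ≠ k, either R ∪ R′ ⊆ {x : g_i(x) ≥ 0} or R ∪ R′ ⊆ {x : g_i(x) ≤ 0}. If s and s′ are affine functions on ℝⁿ with N = s on R and N = s′ on R′, then s(x) = s′(x) + λ_k · (⟨w_k, x⟩ + b_k) for all x ∈ ℝⁿ. -/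

import Mathlib

open Set

/-- An affine function on `ℝⁿ`, i.e. `x ↦ ⟨a, x⟩ + c`. -/
def IsAffineFn {n : ℕ} (s : (Fin n → ℝ) → ℝ) : Prop :=
  ∃ (a : Fin n → ℝ) (c : ℝ), ∀ x, s x = (∑ i, a i * x i) + c

lemma isAffineFn_comb {n m : ℕ} (c : Fin m → ℝ) (w : Fin m → Fin n → ℝ) (b : Fin m → ℝ) :
    IsAffineFn (fun x => ∑ i, c i * ((∑ j, w i j * x j) + b i)) := by
  refine ⟨fun j => ∑ i, c i * w i j, ∑ i, c i * b i, fun x => ?_⟩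
  simp only [mul_add, Finset.mul_sum, Finset.sum_add_distrib, Finset.sum_mul]
  rw [Finset.sum_comm]
  ring_nf

lemma affine_eq_of_eqOn_open {n : ℕ} {f g : (Fin n → ℝ) → ℝ}
    (hf : IsAffineFn f) (hg : IsAffineFn g) {U : Set (Fin n → ℝ)}
    (hU : IsOpen U) (hne : U.Nonempty) (h : ∀ x ∈ U, f x = g x) :
    ∀ x, f x = g x := by
  obtain ⟨a, c, hfa⟩ := hf
  obtain ⟨a', c', hga⟩ := hg
  obtain ⟨x0, hx0⟩ := hne
  obtain ⟨ε, hε, hball⟩ := Metric.isOpen_iff.1 hU x0 hx0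
  have hx0U : x0 ∈ U := hx0
  have key : ∀ (v : Fin n → ℝ) (i : Fin n),
      (∑ j, v j * Function.update x0 i (x0 i + ε/2) j) = (∑ j, v j * x0 j) + v i * (ε/2) := by
    intro v i
    have h1 : ∀ j : Fin n, v j * Function.update x0 i (x0 i + ε/2) j
        = v j * x0 j + (if j = i then v i * (ε/2) else 0) := by
      intro j
      rcases eq_or_ne j i with rfl | hji
      · simp [Function.update_self]; ring
      · simp [Function.update_of_ne hji, hji]
    rw [Finset.sum_congr rfl (fun j _ => h1 j), Finset.sum_add_distrib,
      Finset.sum_ite_eq' Finset.univ i]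
    simp
  have ha : ∀ i, a i = a' i := by
    intro i
    set y := Function.update x0 i (x0 i + ε/2) with hy
    have hyU : y ∈ U := by
      apply hball
      rw [Metric.mem_ball, dist_pi_lt_iff hε]
      intro j
      rcases eq_or_ne j i with rfl | hji
      · simp [hy, Function.update_self, Real.dist_eq]
        rw [abs_of_nonneg (by linarith)]; linarith
      · simp [hy, Function.update_of_ne hji, hε]
    have e1 := h y hyU
    have e2 := h x0 hx0U
    rw [hfa, hga] at e1 e2
    rw [key a i, key a' i] at e1
    have : a i * (ε/2) = a' i * (ε/2) := by linarith
    have hne2 : (ε/2) ≠ 0 := by positivity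
    exact mul_right_cancel₀ hne2 this
  have hc : c = c' := by
    have e2 := h x0 hx0U
    rw [hfa, hga] at e2
    have : (∑ j, a j * x0 j) = ∑ j, a' j * x0 j :=
      Finset.sum_congr rfl (fun j _ => by rw [ha j])
    linarith
  intro x
  rw [hfa, hga, hc]
  exact congrArg (· + c') (Finset.sum_congr rfl (fun j _ => by rw [ha j]))

/-- Multiple representations of a linear piece: if the two
regions `R`, `R'` with nonempty interior are separated by the hyperplane of the
`k`-th unit and all other units have constant sign on `R ∪ R'`, then the
adjacent linear pieces `s`, `s'` of the network satisfy
`s = s' + λ_k · (⟨w_k,·⟩ + b_k)`. -/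
theorem adjacent_pieces_of_two_layer_network
    (n m : ℕ) (hn : 1 ≤ n)
    (w : Fin m → Fin n → ℝ) (b lam : Fin m → ℝ)
    (R R' : Set (Fin n → ℝ))
    (hR : (interior R).Nonempty) (hR' : (interior R').Nonempty)
    (k : Fin m)
    (hRk : ∀ x ∈ R, 0 ≤ (∑ j, w k j * x j) + b k)
    (hR'k : ∀ x ∈ R', (∑ j, w k j * x j) + b k ≤ 0)
    (hother : ∀ i : Fin m, i ≠ k →
      (∀ x ∈ R ∪ R', 0 ≤ (∑ j, w i j * x j) + b i) ∨
      (∀ x ∈ R ∪ R', (∑ j, w i j * x j) + b i ≤ 0))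
    (s s' : (Fin n → ℝ) → ℝ) (hs : IsAffineFn s) (hs' : IsAffineFn s')
    (hNs : ∀ x ∈ R, (∑ i, lam i * max 0 ((∑ j, w i j * x j) + b i)) = s x)
    (hNs' : ∀ x ∈ R', (∑ i, lam i * max 0 ((∑ j, w i j * x j) + b i)) = s' x) :
    ∀ x, s x = s' x + lam k * ((∑ j, w k j * x j) + b k) := by
  classical
  set g : Fin m → (Fin n → ℝ) → ℝ := fun i x => (∑ j, w i j * x j) + b i with hg
  set t : Fin m → ℝ := fun i =>
    if i = k then 1 else if (∀ x ∈ R ∪ R', 0 ≤ g i x) then 1 else 0 with ht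
  set t' : Fin m → ℝ := fun i => if i = k then 0 else t i with ht'
  set A : (Fin n → ℝ) → ℝ := fun x => ∑ i, (lam i * t i) * g i x with hA
  set A' : (Fin n → ℝ) → ℝ := fun x => ∑ i, (lam i * t' i) * g i x with hA'
  have hAaff : IsAffineFn A := isAffineFn_comb (fun i => lam i * t i) w b
  have hA'aff : IsAffineFn A' := isAffineFn_comb (fun i => lam i * t' i) w b
  -- s = A everywhere
  have hsA : ∀ x, s x = A x := by
    apply affine_eq_of_eqOn_open hs hAaff isOpen_interior hR
    intro x hx
    have hxR : x ∈ R := interior_subset hx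
    rw [← hNs x hxR]
    refine Finset.sum_congr rfl (fun i _ => ?_)
    rcases eq_or_ne i k with rfl | hik
    · rw [max_eq_right (hRk x hxR)]
      simp [ht, hg]
    · rcases hother i hik with hpos | hneg
      · rw [max_eq_right (hpos x (Or.inl hxR))]
        simp only [ht, hg, if_neg hik, if_pos hpos]
        ring
      · by_cases hP : ∀ x ∈ R ∪ R', 0 ≤ g i x
        · rw [max_eq_right (hP x (Or.inl hxR))]
          simp only [ht, if_neg hik, if_pos hP]
          ring
        · have hti0 : t i = 0 := by rw [ht]; simp only; rw [if_neg hik, if_neg hP]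
          rw [max_eq_left (hneg x (Or.inl hxR)), hti0]
          ring
  have hs'A' : ∀ x, s' x = A' x := by
    apply affine_eq_of_eqOn_open hs' hA'aff isOpen_interior hR'
    intro x hx
    have hxR : x ∈ R' := interior_subset hx
    rw [← hNs' x hxR]
    refine Finset.sum_congr rfl (fun i _ => ?_)
    rcases eq_or_ne i k with rfl | hik
    · rw [max_eq_left (hR'k x hxR)]
      simp [ht']
    · have hti : t' i = t i := by simp [ht', hik]
      rw [hti]
      rcases hother i hik with hpos | hneg
      · rw [max_eq_right (hpos x (Or.inr hxR))]
        simp only [ht, hg, if_neg hik, if_pos hpos]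
        ring
      · by_cases hP : ∀ x ∈ R ∪ R', 0 ≤ g i x
        · rw [max_eq_right (hP x (Or.inr hxR))]
          simp only [ht, if_neg hik, if_pos hP]
          ring
        · have hti0 : t i = 0 := by rw [ht]; simp only; rw [if_neg hik, if_neg hP]
          rw [max_eq_left (hneg x (Or.inr hxR)), hti0]
          ring
  intro x
  rw [hsA x, hs'A' x]
  have : A x - A' x = lam k * g k x := by
    rw [hA, hA', ← Finset.sum_sub_distrib]
    rw [Finset.sum_eq_single k]
    · simp [ht, ht']
    · intro i _ hik
      have : t' i = t i := by simp [ht', hik]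
      rw [this]; ring
    · intro h; exact absurd (Finset.mem_univ k) h
  have hgk : g k x = (∑ j, w k j * x j) + b k := rfl
  rw [hgk] at this
  linarith
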